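/- Let A and B be positive semidefinite matrices on ℝ^d with the same column space (image) and A ⪰ B (i.e., A − B is positive semidefinite). Then the Moore–Penrose pseudo-inverses satisfy A⁺ ⪯ B⁺. -/

import Mathlib

open Matrix

def IsMoorePenroseInv {n : Type*} [Fintype n] (A X : Matrix n n ℝ) : Prop :=
  A * X * A = A ∧ X * A * X = X ∧ (A * X)ᵀ = A * X ∧ (X * A)ᵀ = X * A

lemma mp_unique {n : Type*} [Fintype n] {A X Y : Matrix n n ℝ}
    (hX : IsMoorePenroseInv A X) (hY : IsMoorePenroseInv A Y) : X = Y := by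
  obtain ⟨hX1, hX2, hX3, hX4⟩ := hX
  obtain ⟨hY1, hY2, hY3, hY4⟩ := hY
  have h1 : A * X = A * Y := by
    calc A * X = (A * X)ᵀ := hX3.symm
      _ = ((A * Y) * (A * X))ᵀ := by
          rw [show (A * Y) * (A * X) = ((A * Y * A) * X) by
            simp only [Matrix.mul_assoc], hY1]
      _ = (A * X)ᵀ * (A * Y)ᵀ := transpose_mul _ _
      _ = (A * X) * (A * Y) := by rw [hX3, hY3]
      _ = (A * X * A) * Y := by simp only [Matrix.mul_assoc]
      _ = A * Y := by rw [hX1]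
  have h2 : X * A = Y * A := by
    calc X * A = (X * A)ᵀ := hX4.symm
      _ = ((X * A) * (Y * A))ᵀ := by
          rw [show (X * A) * (Y * A) = (X * (A * Y * A)) by
            simp only [Matrix.mul_assoc], hY1]
      _ = (Y * A)ᵀ * (X * A)ᵀ := transpose_mul _ _
      _ = (Y * A) * (X * A) := by rw [hX4, hY4]
      _ = Y * (A * X * A) := by simp only [Matrix.mul_assoc]
      _ = Y * A := by rw [hX1]
  calc X = X * A * X := hX2.symm
    _ = Y * A * X := by rw [h2]
    _ = Y * (A * Y) := by rw [Matrix.mul_assoc, h1]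
    _ = Y := by rw [← Matrix.mul_assoc, hY2]

lemma mp_transpose {n : Type*} [Fintype n] {A X : Matrix n n ℝ}
    (hX : IsMoorePenroseInv A X) : IsMoorePenroseInv Aᵀ Xᵀ := by
  obtain ⟨hX1, hX2, hX3, hX4⟩ := hX
  refine ⟨?_, ?_, ?_, ?_⟩
  · rw [← transpose_mul, ← transpose_mul, ← Matrix.mul_assoc, hX1]
  · rw [← transpose_mul, ← transpose_mul, ← Matrix.mul_assoc, hX2]
  · rw [← transpose_mul, transpose_transpose, hX4]
  · rw [← transpose_mul, transpose_transpose, hX3]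

lemma mp_symm {n : Type*} [Fintype n] {A X : Matrix n n ℝ}
    (hA : Aᵀ = A) (hX : IsMoorePenroseInv A X) : Xᵀ = X :=
  mp_unique (hA ▸ mp_transpose hX) hX

theorem stmt2 {d : ℕ} (A B Aplus Bplus : Matrix (Fin d) (Fin d) ℝ)
    (hA : A.PosSemidef) (hB : B.PosSemidef)
    (himg : LinearMap.range A.mulVecLin = LinearMap.range B.mulVecLin)
    (hAB : (A - B).PosSemidef)
    (hAp : IsMoorePenroseInv A Aplus) (hBp : IsMoorePenroseInv B Bplus) :
    (Bplus - Aplus).PosSemidef := by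
  have hAs : Aᵀ = A := by
    have := hA.isHermitian
    rwa [← conjTranspose_eq_transpose_of_trivial]
  have hBs : Bᵀ = B := by
    have := hB.isHermitian
    rwa [← conjTranspose_eq_transpose_of_trivial]
  have hAps : Aplusᵀ = Aplus := mp_symm hAs hAp
  have hBps : Bplusᵀ = Bplus := mp_symm hBs hBp
  -- commuting of projections
  have hAcomm : A * Aplus = Aplus * A := by
    calc A * Aplus = (A * Aplus)ᵀ := hAp.2.2.1.symm
      _ = Aplusᵀ * Aᵀ := transpose_mul _ _
      _ = Aplus * A := by rw [hAps, hAs]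
  have hBcomm : B * Bplus = Bplus * B := by
    calc B * Bplus = (B * Bplus)ᵀ := hBp.2.2.1.symm
      _ = Bplusᵀ * Bᵀ := transpose_mul _ _
      _ = Bplus * B := by rw [hBps, hBs]
  -- range fact : B * Bplus * A = A
  have hBBpA : B * Bplus * A = A := by
    ext i j
    have key : ∀ x : Fin d → ℝ, (B * Bplus * A) *ᵥ x = A *ᵥ x := by
      intro x
      have hmem : A *ᵥ x ∈ LinearMap.range B.mulVecLin := by
        rw [← himg]
        exact ⟨x, rfl⟩
      obtain ⟨y, hy⟩ := hmem
      have hy' : B *ᵥ y = A *ᵥ x := hy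
      calc (B * Bplus * A) *ᵥ x = (B * Bplus) *ᵥ (A *ᵥ x) := by
            rw [mulVec_mulVec]
        _ = (B * Bplus) *ᵥ (B *ᵥ y) := by rw [hy']
        _ = (B * Bplus * B) *ᵥ y := by rw [mulVec_mulVec]
        _ = B *ᵥ y := by rw [hBp.1]
        _ = A *ᵥ x := hy'
    have := congrFun (key (Pi.single j 1)) i
    simpa [mulVec_single] using this
  -- derived projection identities
  have hBpBA : Bplus * B * A = A := by rw [← hBcomm, hBBpA]
  have hApAA : A * Aplus * Aplus = Aplus := by
    calc A * Aplus * Aplus = Aplus * A * Aplus := by rw [hAcomm]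
      _ = Aplus := hAp.2.1
  have hPAp : Bplus * B * Aplus = Aplus := by
    calc Bplus * B * Aplus = Bplus * B * (A * Aplus * Aplus) := by rw [hApAA]
      _ = (Bplus * B * A) * Aplus * Aplus := by simp only [Matrix.mul_assoc]
      _ = Aplus := by rw [hBpBA, hApAA]
  have hApP : Aplus * B * Bplus = Aplus := by
    have : (Aplus * B * Bplus)ᵀ = Aplus := by
      rw [transpose_mul, transpose_mul, hBps, hBs, hAps, ← Matrix.mul_assoc, hPAp]
    calc Aplus * B * Bplus = (Aplus * B * Bplus)ᵀᵀ := (transpose_transpose _).symm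
      _ = Aplusᵀ := by rw [this]
      _ = Aplus := hAps
  have hdot : ∀ (M : Matrix (Fin d) (Fin d) ℝ) (u w : Fin d → ℝ),
      u ⬝ᵥ (Mᵀ *ᵥ w) = (M *ᵥ u) ⬝ᵥ w := by
    intro M u w
    rw [dotProduct_mulVec, vecMul_transpose]
  -- symmetry of quadratic form of B
  have hsymB : ∀ u w : Fin d → ℝ, u ⬝ᵥ B *ᵥ w = w ⬝ᵥ B *ᵥ u := by
    intro u w
    rw [dotProduct_mulVec, ← mulVec_transpose, hBs, dotProduct_comm]
  -- key lemma : B - B * Aplus * B is PSD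
  have hkey : (B - B * Aplus * B).PosSemidef := by
    refine posSemidef_iff_dotProduct_mulVec.mpr ⟨?_, ?_⟩
    · show (B - B * Aplus * B)ᴴ = _
      rw [conjTranspose_eq_transpose_of_trivial, transpose_sub, transpose_mul,
        transpose_mul, hBs, hAps, Matrix.mul_assoc]
    · intro x
      set v : Fin d → ℝ := Aplus *ᵥ (B *ᵥ x) with hv
      have hvx : v = (Aplus * B) *ᵥ x := by rw [hv, mulVec_mulVec]
      have c1 : x ⬝ᵥ ((B * Aplus * B) *ᵥ x) = v ⬝ᵥ (A *ᵥ v) := by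
        have hm : (Aplus * B)ᵀ * (A * (Aplus * B)) = B * Aplus * B := by
          rw [transpose_mul, hAps, hBs]
          calc B * Aplus * (A * (Aplus * B))
              = B * (Aplus * A * Aplus) * B := by simp only [Matrix.mul_assoc]
            _ = B * Aplus * B := by rw [hAp.2.1]
        calc x ⬝ᵥ ((B * Aplus * B) *ᵥ x)
            = x ⬝ᵥ (((Aplus * B)ᵀ * (A * (Aplus * B))) *ᵥ x) := by rw [hm]
          _ = x ⬝ᵥ ((Aplus * B)ᵀ *ᵥ ((A * (Aplus * B)) *ᵥ x)) := by
              rw [mulVec_mulVec]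
          _ = ((Aplus * B) *ᵥ x) ⬝ᵥ ((A * (Aplus * B)) *ᵥ x) :=
              hdot (Aplus * B) x _
          _ = v ⬝ᵥ (A *ᵥ v) := by rw [← hvx, ← mulVec_mulVec, ← hvx]
      have c2 : v ⬝ᵥ (B *ᵥ x) = v ⬝ᵥ (A *ᵥ v) := by
        calc v ⬝ᵥ (B *ᵥ x) = ((Aplus * B) *ᵥ x) ⬝ᵥ (B *ᵥ x) := by rw [hvx]
          _ = x ⬝ᵥ ((Aplus * B)ᵀ *ᵥ (B *ᵥ x)) :=
              (hdot (Aplus * B) x _).symm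
          _ = x ⬝ᵥ (((Aplus * B)ᵀ * B) *ᵥ x) := by rw [mulVec_mulVec]
          _ = x ⬝ᵥ ((B * Aplus * B) *ᵥ x) := by
              rw [transpose_mul, hAps, hBs]
          _ = v ⬝ᵥ (A *ᵥ v) := c1
      -- Cauchy-Schwarz via discriminant
      have c3 : (v ⬝ᵥ (B *ᵥ x)) ^ 2 ≤ (v ⬝ᵥ (B *ᵥ v)) * (x ⬝ᵥ (B *ᵥ x)) := by
        have hq : ∀ t : ℝ, 0 ≤ (x ⬝ᵥ (B *ᵥ x)) * (t * t) +
            (2 * (v ⬝ᵥ (B *ᵥ x))) * t + v ⬝ᵥ (B *ᵥ v) := by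
          intro t
          have h0 := hB.dotProduct_mulVec_nonneg (v + t • x)
          simp only [star_trivial, Pi.star_apply, mulVec_add, mulVec_smul,
            dotProduct_add, add_dotProduct, dotProduct_smul, smul_dotProduct,
            smul_eq_mul] at h0
          have hx : x ⬝ᵥ (B *ᵥ v) = v ⬝ᵥ (B *ᵥ x) := hsymB x v
          rw [hx] at h0
          exact h0.trans_eq (by ring)
        have := discrim_le_zero hq
        rw [discrim] at this
        nlinarith [this]
      have c4 : v ⬝ᵥ (B *ᵥ v) ≤ v ⬝ᵥ (A *ᵥ v) := by
        have h0 := hAB.dotProduct_mulVec_nonneg v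
        simp only [star_trivial, sub_mulVec, dotProduct_sub] at h0
        linarith
      have c5 : 0 ≤ v ⬝ᵥ (A *ᵥ v) := by
        have := hA.dotProduct_mulVec_nonneg v
        simpa using this
      have c6 : 0 ≤ x ⬝ᵥ (B *ᵥ x) := by
        have := hB.dotProduct_mulVec_nonneg x
        simpa using this
      have hgoal : v ⬝ᵥ (A *ᵥ v) ≤ x ⬝ᵥ (B *ᵥ x) := by
        rcases eq_or_lt_of_le c5 with h | h
        · linarith
        · have hsq : (v ⬝ᵥ (A *ᵥ v)) ^ 2 ≤ (v ⬝ᵥ (A *ᵥ v)) * (x ⬝ᵥ (B *ᵥ x)) := by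
            calc (v ⬝ᵥ (A *ᵥ v)) ^ 2 = (v ⬝ᵥ (B *ᵥ x)) ^ 2 := by rw [c2]
              _ ≤ (v ⬝ᵥ (B *ᵥ v)) * (x ⬝ᵥ (B *ᵥ x)) := c3
              _ ≤ (v ⬝ᵥ (A *ᵥ v)) * (x ⬝ᵥ (B *ᵥ x)) := by
                  exact mul_le_mul_of_nonneg_right c4 c6
          nlinarith [hsq]
      have hexp : star x ⬝ᵥ ((B - B * Aplus * B) *ᵥ x)
          = x ⬝ᵥ (B *ᵥ x) - x ⬝ᵥ ((B * Aplus * B) *ᵥ x) := by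
        simp [sub_mulVec, dotProduct_sub]
      rw [hexp, c1]
      linarith
  -- assemble
  have hconj := hkey.conjTranspose_mul_mul_same Bplus
  have hrw : Bplusᴴ * (B - B * Aplus * B) * Bplus = Bplus - Aplus := by
    rw [conjTranspose_eq_transpose_of_trivial, hBps, Matrix.mul_sub,
      Matrix.sub_mul]
    congr 1
    · exact hBp.2.1
    · simp only [← Matrix.mul_assoc]
      calc Bplus * B * Aplus * B * Bplus = Aplus * B * Bplus := by rw [hPAp]
        _ = Aplus := hApP
  rwa [hrw] at hconj
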